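/- Let 𝔽 be a field, m ≥ 1, k ≥ 1, and let P(λ) = Σ_{i=0}^{2k−1} P_i λ^i be an m×m T-palindromic matrix polynomial of degree 2k−1 over 𝔽, i.e. P_i = (P_{2k−1−i})ᵀ for all i. Define M ∈ 𝔽^{km×km} as the block matrix with m×m blocks given by M_{i,k} = (P_{i−1})ᵀ for i = 1,…,k and all other blocks zero. Then the pencil ℒ(λ) := [[λM + Mᵀ, L_φ(λ)ᵀ ⊗ I_m],[L_ψ(λ) ⊗ I_m, 0]], where L_φ(λ) is the (k−1)×k pencil with entries 1 in position (r,r) and −λ in position (r,r+1) and L_ψ(λ) is the (k−1)×k pencil with entries λ in position (r,r) and −1 in position (r,r+1), is T-palindromic (ℒ(λ) = rev ℒ(λ)ᵀ with rev ℒ(λ) := λ·ℒ(1/λ)) and is a linearization for P(λ). -/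

import Mathlib

open Polynomial Matrix Kronecker

namespace PaperLin

variable {F : Type*} [Field F]

/-- A square matrix polynomial is *unimodular* if its determinant is a
nonzero constant of the field. -/
def Unimodular {ι : Type*} [Fintype ι] [DecidableEq ι]
    (E : Matrix ι ι (Polynomial F)) : Prop :=
  ∃ c : F, c ≠ 0 ∧ E.det = Polynomial.C c

/-- `L` is a linearization of `P`: `L` is extended unimodularly equivalent to
`P`, i.e. `E(λ) ⬝ diag(I_r, L(λ)) ⬝ G(λ) = diag(I_s, P(λ))` for some unimodular
`E`, `G` (up to bijections of the index sets). -/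
def IsLinearization {ι₁ ι₂ κ : Type*} [Fintype ι₁] [DecidableEq ι₁]
    [Fintype ι₂] [DecidableEq ι₂] [Fintype κ] [DecidableEq κ]
    (L : Matrix ι₁ ι₂ (Polynomial F)) (P : Matrix κ κ (Polynomial F)) : Prop :=
  ∃ (r s : ℕ)
    (E : Matrix (Fin r ⊕ ι₁) (Fin r ⊕ ι₁) (Polynomial F))
    (G : Matrix (Fin r ⊕ ι₂) (Fin r ⊕ ι₂) (Polynomial F))
    (e₁ : (Fin r ⊕ ι₁) ≃ (Fin s ⊕ κ)) (e₂ : (Fin r ⊕ ι₂) ≃ (Fin s ⊕ κ)),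
    Unimodular E ∧ Unimodular G ∧
    E * Matrix.fromBlocks (1 : Matrix (Fin r) (Fin r) (Polynomial F)) 0 0 L * G =
      Matrix.reindex e₁.symm e₂.symm (Matrix.fromBlocks 1 0 0 P)

/-! ### auxiliary sum lemmas -/

lemma sum_ite_unique {ι M : Type*} [Fintype ι] [AddCommMonoid M]
    (p : ι → Prop) [DecidablePred p] (f : ι → M) (i₀ : ι) (hp : ∀ i, p i ↔ i = i₀) :
    (∑ i, if p i then f i else 0) = f i₀ := by
  rw [Fintype.sum_eq_single i₀ (fun b hb => if_neg (fun hc => hb ((hp b).mp hc)))]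
  exact if_pos ((hp i₀).mpr rfl)

lemma sum_ite_zero' {ι M : Type*} [Fintype ι] [AddCommMonoid M]
    (p : ι → Prop) [DecidablePred p] (f : ι → M) (hp : ∀ i, ¬ p i) :
    (∑ i, if p i then f i else 0) = 0 :=
  Finset.sum_eq_zero fun i _ => if_neg (hp i)

lemma unimodular_of_mul_eq_one {ι : Type*} [Fintype ι] [DecidableEq ι]
    {E E' : Matrix ι ι (Polynomial F)} (h : E * E' = 1) : Unimodular E := by
  have hu : IsUnit E.det := by
    have := congrArg Matrix.det h
    rw [Matrix.det_mul, Matrix.det_one] at this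
    exact IsUnit.of_mul_eq_one _ this
  obtain ⟨c, hc, hcd⟩ := Polynomial.isUnit_iff.mp hu
  exact ⟨c, hc.ne_zero, hcd.symm⟩

/-! ### the small (k-level) matrices -/

noncomputable def Ts (k : ℕ) : Matrix (Fin k) (Fin k) (Polynomial F) :=
  Matrix.of fun i j => if (j : ℕ) ≤ (i : ℕ) then X ^ ((i : ℕ) - (j : ℕ)) else 0

noncomputable def TsInv (k : ℕ) : Matrix (Fin k) (Fin k) (Polynomial F) :=
  Matrix.of fun i j =>
    (if i = j then 1 else 0) + (if (i : ℕ) = (j : ℕ) + 1 then -X else 0)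

noncomputable def Lphi (k : ℕ) : Matrix (Fin (k - 1)) (Fin k) (Polynomial F) :=
  Matrix.of fun r c =>
    if (c : ℕ) = (r : ℕ) then 1
    else if (c : ℕ) = (r : ℕ) + 1 then -Polynomial.X
    else 0

noncomputable def Lpsi (k : ℕ) : Matrix (Fin (k - 1)) (Fin k) (Polynomial F) :=
  Matrix.of fun r c =>
    if (c : ℕ) = (r : ℕ) then Polynomial.X
    else if (c : ℕ) = (r : ℕ) + 1 then -1
    else 0

noncomputable def Bs (k : ℕ) : Matrix (Fin k) (Fin (k - 1)) (Polynomial F) :=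
  Matrix.of fun i s => if (i : ℕ) = (s : ℕ) then 1 else 0

noncomputable def Cs (k : ℕ) : Matrix (Fin (k - 1)) (Fin k) (Polynomial F) :=
  Matrix.of fun r q => if (q : ℕ) = (r : ℕ) + 1 then -1 else 0

lemma Ts_mul_TsInv (k : ℕ) : (Ts k : Matrix _ _ (Polynomial F)) * TsInv k = 1 := by
  refine Matrix.ext fun i j => ?_
  rw [Matrix.mul_apply]
  have h1 : ∀ v : Fin k, Ts k i v * TsInv k v j =
      (if v = j then (Ts k i v : Polynomial F) else 0) +
      (if (v : ℕ) = (j : ℕ) + 1 then -(X * Ts k i v) else 0) := by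
    intro v
    simp only [TsInv, Matrix.of_apply, mul_add, mul_ite, mul_one, mul_zero]
    congr 1 <;> split_ifs <;> ring
  rw [Finset.sum_congr rfl fun v _ => h1 v, Finset.sum_add_distrib,
    Finset.sum_ite_eq' Finset.univ j (fun v => Ts k i v), if_pos (Finset.mem_univ j)]
  by_cases hw : (j : ℕ) + 1 < k
  · rw [sum_ite_unique _ _ (⟨(j : ℕ) + 1, hw⟩ : Fin k) (fun v => by
      constructor
      · intro h; exact Fin.ext h
      · intro h; subst h; rfl)]
    simp only [Ts, Matrix.of_apply, Matrix.one_apply, Fin.ext_iff]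
    rcases Nat.lt_trichotomy (i : ℕ) (j : ℕ) with h | h | h
    · rw [if_neg (by omega), if_neg (by omega), if_neg (by omega)]; ring
    · rw [if_pos (by omega), if_neg (by omega), if_pos (by omega)]
      have : (i : ℕ) - (j : ℕ) = 0 := by omega
      simp [this]
    · rw [if_pos (by omega), if_pos (by omega), if_neg (by omega)]
      have h2 : (i : ℕ) - (j : ℕ) = ((i : ℕ) - ((j : ℕ) + 1)) + 1 := by omega
      rw [h2, pow_succ]
      ring
  · rw [sum_ite_zero' _ _ (fun v => by have := v.2; omega)]
    simp only [Ts, Matrix.of_apply, Matrix.one_apply, Fin.ext_iff]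
    have hj : (j : ℕ) = k - 1 := by have := j.2; omega
    have hi := i.2
    rcases Nat.lt_or_ge (i : ℕ) (j : ℕ) with h | h
    · rw [if_neg (by omega), if_neg (by omega)]; ring
    · have : (i : ℕ) = (j : ℕ) := by omega
      rw [if_pos (by omega), if_pos (by omega)]
      simp [this]

lemma Ts_mul_Lphi (k : ℕ) : (Ts k : Matrix _ _ (Polynomial F)) * (Lphi (F := F) k)ᵀ = Bs k := by
  refine Matrix.ext fun i s => ?_
  rw [Matrix.mul_apply]
  have hs1 : (s : ℕ) < k := by have := s.2; omega
  have hs2 : (s : ℕ) + 1 < k := by have := s.2; omega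
  have h1 : ∀ v : Fin k, Ts k i v * (Lphi k)ᵀ v s =
      (if (v : ℕ) = (s : ℕ) then (Ts k i v : Polynomial F) else 0) +
      (if (v : ℕ) = (s : ℕ) + 1 then -(X * Ts k i v) else 0) := by
    intro v
    simp only [Lphi, Matrix.transpose_apply, Matrix.of_apply]
    split_ifs <;> first | omega | ring
  rw [Finset.sum_congr rfl fun v _ => h1 v, Finset.sum_add_distrib,
    sum_ite_unique _ _ (⟨(s : ℕ), hs1⟩ : Fin k) (fun v => by rw [Fin.ext_iff]),
    sum_ite_unique _ _ (⟨(s : ℕ) + 1, hs2⟩ : Fin k) (fun v => by rw [Fin.ext_iff])]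
  simp only [Ts, Bs, Matrix.of_apply]
  rcases Nat.lt_trichotomy (i : ℕ) (s : ℕ) with h | h | h
  · rw [if_neg (by omega), if_neg (by omega), if_neg (by omega)]; ring
  · rw [if_pos (by omega), if_neg (by omega), if_pos (by omega)]
    have : (i : ℕ) - (s : ℕ) = 0 := by omega
    simp [this]
  · rw [if_pos (by omega), if_pos (by omega), if_neg (by omega)]
    have h2 : (i : ℕ) - (s : ℕ) = ((i : ℕ) - ((s : ℕ) + 1)) + 1 := by omega
    rw [h2, pow_succ]
    ring

lemma Lpsi_mul_Ts (k : ℕ) : (Lpsi k : Matrix _ _ (Polynomial F)) * Ts (F := F) k = Cs k := by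
  refine Matrix.ext fun r q => ?_
  rw [Matrix.mul_apply]
  have hs1 : (r : ℕ) < k := by have := r.2; omega
  have hs2 : (r : ℕ) + 1 < k := by have := r.2; omega
  have h1 : ∀ v : Fin k, Lpsi k r v * Ts k v q =
      (if (v : ℕ) = (r : ℕ) then X * (Ts k v q : Polynomial F) else 0) +
      (if (v : ℕ) = (r : ℕ) + 1 then -(Ts k v q) else 0) := by
    intro v
    simp only [Lpsi, Matrix.of_apply]
    split_ifs <;> first | omega | ring
  rw [Finset.sum_congr rfl fun v _ => h1 v, Finset.sum_add_distrib,
    sum_ite_unique _ _ (⟨(r : ℕ), hs1⟩ : Fin k) (fun v => by rw [Fin.ext_iff]),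
    sum_ite_unique _ _ (⟨(r : ℕ) + 1, hs2⟩ : Fin k) (fun v => by rw [Fin.ext_iff])]
  simp only [Ts, Cs, Matrix.of_apply]
  rcases Nat.lt_trichotomy (q : ℕ) ((r : ℕ) + 1) with h | h | h
  · rw [if_pos (by omega), if_pos (by omega), if_neg (by omega)]
    have h2 : (r : ℕ) + 1 - (q : ℕ) = ((r : ℕ) - (q : ℕ)) + 1 := by omega
    rw [h2, pow_succ]
    ring
  · rw [if_neg (by omega), if_pos (by omega), if_pos (by omega)]
    have : (r : ℕ) + 1 - (q : ℕ) = 0 := by omega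
    simp [this]
  · rw [if_neg (by omega), if_neg (by omega), if_neg (by omega)]; ring

/-! ### the big (km-level) matrices -/

noncomputable def Mm (m k : ℕ) (P : ℕ → Matrix (Fin m) (Fin m) F) :
    Matrix (Fin k × Fin m) (Fin k × Fin m) F :=
  Matrix.of fun p q => if (q.1 : ℕ) = k - 1 then P (p.1 : ℕ) q.2 p.2 else 0

noncomputable def Am (m k : ℕ) (P : ℕ → Matrix (Fin m) (Fin m) F) :
    Matrix (Fin k × Fin m) (Fin k × Fin m) (Polynomial F) :=
  (Polynomial.X : Polynomial F) • (Mm m k P).map Polynomial.C + (Mm m k P)ᵀ.map Polynomial.C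

noncomputable def Tb (m k : ℕ) : Matrix (Fin k × Fin m) (Fin k × Fin m) (Polynomial F) :=
  (Ts k) ⊗ₖ (1 : Matrix (Fin m) (Fin m) (Polynomial F))

noncomputable def TbInv (m k : ℕ) : Matrix (Fin k × Fin m) (Fin k × Fin m) (Polynomial F) :=
  (TsInv k) ⊗ₖ (1 : Matrix (Fin m) (Fin m) (Polynomial F))

noncomputable def Bb (m k : ℕ) : Matrix (Fin k × Fin m) (Fin (k - 1) × Fin m) (Polynomial F) :=
  (Bs k) ⊗ₖ (1 : Matrix (Fin m) (Fin m) (Polynomial F))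

noncomputable def Cb (m k : ℕ) : Matrix (Fin (k - 1) × Fin m) (Fin k × Fin m) (Polynomial F) :=
  (Cs k) ⊗ₖ (1 : Matrix (Fin m) (Fin m) (Polynomial F))

noncomputable def Pmm (m k : ℕ) (P : ℕ → Matrix (Fin m) (Fin m) F) :
    Matrix (Fin m) (Fin m) (Polynomial F) :=
  Matrix.of fun a b =>
    ∑ i ∈ Finset.range (2 * k), Polynomial.C (P i a b) * Polynomial.X ^ i

noncomputable def Ahat (m k : ℕ) (P : ℕ → Matrix (Fin m) (Fin m) F) :
    Matrix (Fin k × Fin m) (Fin k × Fin m) (Polynomial F) :=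
  Tb m k * Am m k P * Tb m k

lemma Tb_mul_TbInv (m k : ℕ) : (Tb m k : Matrix _ _ (Polynomial F)) * TbInv m k = 1 := by
  rw [Tb, TbInv, ← Matrix.mul_kronecker_mul, Ts_mul_TsInv, Matrix.one_mul,
    Matrix.one_kronecker_one]

lemma Ahat_entry' (m k : ℕ) (hk : 1 ≤ k) (P : ℕ → Matrix (Fin m) (Fin m) F)
    (hpal : ∀ i ≤ 2 * k - 1, P i = (P (2 * k - 1 - i))ᵀ) (a b : Fin m) :
    ((Tb m k * Am m k P * Tb m k : Matrix (Fin k × Fin m) (Fin k × Fin m) (Polynomial F))) (⟨k - 1, by omega⟩, a) (⟨0, by omega⟩, b)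
      = Pmm m k P a b := by
  have key : ((Tb m k * Am m k P * Tb m k : Matrix (Fin k × Fin m) (Fin k × Fin m) (Polynomial F))) (⟨k - 1, by omega⟩, a) (⟨0, by omega⟩, b)
      = ∑ q : Fin k, ∑ p : Fin k,
          X ^ (k - 1 - (p : ℕ)) * Am m k P (p, a) (q, b) * X ^ (q : ℕ) := by
    rw [Matrix.mul_apply]
    rw [← Finset.univ_product_univ, Finset.sum_product]
    refine Finset.sum_congr rfl fun q _ => ?_
    have hcol : ∀ d : Fin m, ∀ x : Polynomial F,
        x * Tb m k (q, d) (⟨0, by omega⟩, b) = if d = b then x * X ^ (q : ℕ) else 0 := by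
      intro d x
      simp only [Tb, kroneckerMap_apply, Ts, Matrix.of_apply, Matrix.one_apply]
      rw [if_pos (Nat.zero_le _)]
      simp only [Nat.sub_zero]
      split_ifs <;> ring
    rw [Finset.sum_congr rfl (fun d _ => hcol d _),
      Finset.sum_ite_eq' Finset.univ b, if_pos (Finset.mem_univ b), Matrix.mul_apply,
      Finset.sum_mul, ← Finset.univ_product_univ, Finset.sum_product]
    refine Finset.sum_congr rfl fun p _ => ?_
    have hrow : ∀ c : Fin m, Tb m k ((⟨k - 1, by omega⟩ : Fin k), a) (p, c)
        = (if a = c then X ^ (k - 1 - (p : ℕ)) else 0 : Polynomial F) := by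
      intro c
      simp only [Tb, kroneckerMap_apply, Ts, Matrix.of_apply, Matrix.one_apply]
      rw [if_pos (by have := p.2; omega)]
      split_ifs <;> ring
    have hterm : ∀ c : Fin m,
        Tb m k ((⟨k - 1, by omega⟩ : Fin k), a) (p, c) * Am m k P (p, c) (q, b) * X ^ (q : ℕ)
        = if a = c then X ^ (k - 1 - (p : ℕ)) * Am m k P (p, c) (q, b) * X ^ (q : ℕ) else 0 :=
      fun c => by rw [hrow c, ite_mul, ite_mul, zero_mul, zero_mul]
    rw [Finset.sum_congr rfl (fun c _ => hterm c),
      Finset.sum_ite_eq Finset.univ a, if_pos (Finset.mem_univ a)]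
  rw [key]
  have pull : ∀ (c : Prop) [Decidable c] (f : Fin k → Polynomial F),
      (∑ p : Fin k, if c then f p else 0) = if c then ∑ p : Fin k, f p else 0 := by
    intro c _ f
    split_ifs <;> simp
  have expand : ∀ q p : Fin k,
      X ^ (k - 1 - (p : ℕ)) * Am m k P (p, a) (q, b) * X ^ (q : ℕ)
      = (if (q : ℕ) = k - 1 then
          X ^ (k - 1 - (p : ℕ)) * X * Polynomial.C (P (p : ℕ) b a) * X ^ (q : ℕ) else 0)
      + (if (p : ℕ) = k - 1 then
          X ^ (k - 1 - (p : ℕ)) * Polynomial.C (P (q : ℕ) a b) * X ^ (q : ℕ) else 0) := by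
    intro q p
    simp only [Am, Mm, Matrix.add_apply, Matrix.smul_apply, Matrix.map_apply,
      Matrix.transpose_apply, Matrix.of_apply, apply_ite Polynomial.C, map_zero, smul_eq_mul]
    split_ifs <;> ring
  rw [Finset.sum_congr rfl (fun q _ => Finset.sum_congr rfl (fun p _ => expand q p))]
  rw [Finset.sum_congr rfl (fun q _ => Finset.sum_add_distrib), Finset.sum_add_distrib]
  have hk1 : k - 1 < k := by omega
  rw [Finset.sum_congr rfl (fun q _ => pull _ _),
    sum_ite_unique (fun q : Fin k => (q : ℕ) = k - 1) _ (⟨k - 1, hk1⟩ : Fin k)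
      (fun q => by rw [Fin.ext_iff]),
    Finset.sum_congr rfl (fun q _ =>
      sum_ite_unique (fun p : Fin k => (p : ℕ) = k - 1) _ (⟨k - 1, hk1⟩ : Fin k)
        (fun p => by rw [Fin.ext_iff]))]
  have e1 : ∀ p : Fin k,
      X ^ (k - 1 - (p : ℕ)) * X * Polynomial.C (P (p : ℕ) b a) * X ^ ((⟨k-1,hk1⟩ : Fin k) : ℕ)
      = Polynomial.C (P (2 * k - 1 - (p : ℕ)) a b) * X ^ (2 * k - 1 - (p : ℕ)) := by
    intro p
    have hP : P (p : ℕ) b a = P (2 * k - 1 - (p : ℕ)) a b := by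
      have := hpal (p : ℕ) (by have := p.2; omega)
      rw [this]; rfl
    have hpow : X ^ (k - 1 - (p : ℕ)) * X * (X : Polynomial F) ^ (k - 1)
        = X ^ (2 * k - 1 - (p : ℕ)) := by
      rw [← pow_succ, ← pow_add]
      congr 1
      have := p.2; omega
    calc X ^ (k - 1 - (p : ℕ)) * X * Polynomial.C (P (p : ℕ) b a) * X ^ (k - 1)
        = (X ^ (k - 1 - (p : ℕ)) * X * X ^ (k - 1)) * Polynomial.C (P (p : ℕ) b a) := by ring
      _ = _ := by rw [hpow, hP]; ring
  have e2 : ∀ q : Fin k,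
      X ^ (k - 1 - (((⟨k-1,hk1⟩ : Fin k)) : ℕ)) * Polynomial.C (P (q : ℕ) a b) * X ^ (q : ℕ)
      = Polynomial.C (P (q : ℕ) a b) * X ^ (q : ℕ) := by
    intro q
    simp [Nat.sub_self]
  rw [Finset.sum_congr rfl (fun p _ => e1 p), Finset.sum_congr rfl (fun q _ => e2 q)]
  have s1 : ∑ p : Fin k, Polynomial.C (P (2 * k - 1 - (p : ℕ)) a b) * X ^ (2 * k - 1 - (p : ℕ))
      = ∑ i ∈ Finset.Ico k (2 * k), Polynomial.C (P i a b) * X ^ i := by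
    rw [Fin.sum_univ_eq_sum_range (fun i => Polynomial.C (P (2*k-1-i) a b) * X ^ (2*k-1-i)) k]
    refine Finset.sum_nbij' (fun i => 2 * k - 1 - i) (fun j => 2 * k - 1 - j)
      (fun x hx => ?_) (fun x hx => ?_) (fun x hx => ?_) (fun x hx => ?_) (fun x hx => rfl)
    · simp only [Finset.mem_range] at hx; simp only [Finset.mem_Ico]; omega
    · simp only [Finset.mem_Ico] at hx; simp only [Finset.mem_range]; omega
    · simp only [Finset.mem_range] at hx; omega
    · simp only [Finset.mem_Ico] at hx; omega
  have s2 : ∑ q : Fin k, Polynomial.C (P (q : ℕ) a b) * X ^ (q : ℕ)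
      = ∑ i ∈ Finset.range k, Polynomial.C (P i a b) * X ^ i :=
    Fin.sum_univ_eq_sum_range (fun i => Polynomial.C (P i a b) * X ^ i) k
  rw [s1, s2, Pmm]
  show _ = ∑ i ∈ Finset.range (2 * k), Polynomial.C (P i a b) * X ^ i
  rw [← Finset.sum_range_add_sum_Ico _ (by omega : k ≤ 2 * k), add_comm]

lemma Ahat_entry (m k : ℕ) (hk : 1 ≤ k) (P : ℕ → Matrix (Fin m) (Fin m) F)
    (hpal : ∀ i ≤ 2 * k - 1, P i = (P (2 * k - 1 - i))ᵀ) (a b : Fin m) :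
    Ahat m k P (⟨k - 1, by omega⟩, a) (⟨0, by omega⟩, b) = Pmm m k P a b :=
  Ahat_entry' m k hk P hpal a b

/-! ### the elimination matrices -/

noncomputable def NrB (m k : ℕ) (P : ℕ → Matrix (Fin m) (Fin m) F) :
    Matrix (Fin k × Fin m) (Fin (k - 1) × Fin m) (Polynomial F) :=
  Matrix.of fun u r =>
    if (u.1 : ℕ) = k - 1 then
      Ahat m k P u (⟨(r.1 : ℕ) + 1, by have := r.1.2; omega⟩, r.2)
    else 0

noncomputable def NcB (m k : ℕ) (P : ℕ → Matrix (Fin m) (Fin m) F) :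
    Matrix (Fin (k - 1) × Fin m) (Fin k × Fin m) (Polynomial F) :=
  Matrix.of fun s q => -(Ahat m k P (⟨(s.1 : ℕ), by have := s.1.2; omega⟩, s.2) q)

lemma NrB_mul_Cb (m k : ℕ) (P : ℕ → Matrix (Fin m) (Fin m) F) :
    NrB m k P * Cb (F := F) m k =
      Matrix.of fun u v =>
        if (u.1 : ℕ) = k - 1 ∧ 1 ≤ (v.1 : ℕ) then -(Ahat m k P u v) else 0 := by
  refine Matrix.ext fun u v => ?_
  simp only [Matrix.of_apply]
  rw [Matrix.mul_apply, ← Finset.univ_product_univ, Finset.sum_product]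
  have h1 : ∀ (r : Fin (k - 1)) (c : Fin m),
      NrB m k P u (r, c) * Cb m k (r, c) v
        = if c = v.2 then NrB m k P u (r, c) * Cs k r v.1 else 0 := by
    intro r c
    simp only [Cb, kroneckerMap_apply, Matrix.one_apply]
    split_ifs <;> ring
  rw [Finset.sum_congr rfl fun r _ => by
    rw [Finset.sum_congr rfl fun c _ => h1 r c,
      Finset.sum_ite_eq' Finset.univ v.2 (fun c => NrB m k P u (r, c) * Cs k r v.1),
      if_pos (Finset.mem_univ _)]]
  have h2 : ∀ r : Fin (k - 1), NrB m k P u (r, v.2) * Cs k r v.1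
      = if (v.1 : ℕ) = (r : ℕ) + 1 then -(NrB m k P u (r, v.2)) else 0 := by
    intro r
    simp only [Cs, Matrix.of_apply]
    split_ifs <;> ring
  rw [Finset.sum_congr rfl fun r _ => h2 r]
  by_cases hv : 1 ≤ (v.1 : ℕ)
  · have hlt : (v.1 : ℕ) - 1 < k - 1 := by have := v.1.2; omega
    rw [sum_ite_unique _ _ (⟨(v.1 : ℕ) - 1, hlt⟩ : Fin (k - 1)) (fun r => by
      rw [Fin.ext_iff]
      constructor
      · intro h; simp only []; omega
      · intro h; simp only [] at h; omega)]
    simp only [NrB, Matrix.of_apply]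
    by_cases hu : (u.1 : ℕ) = k - 1
    · rw [if_pos hu, if_pos ⟨hu, hv⟩]
      have hvv : ((⟨(v.1 : ℕ) - 1 + 1, by have := v.1.2; omega⟩ : Fin k), v.2) = v :=
        Prod.ext (Fin.ext (by simp only []; omega)) rfl
      rw [show ((⟨((⟨(v.1 : ℕ) - 1, hlt⟩ : Fin (k-1)) : ℕ) + 1, by have := v.1.2; omega⟩ : Fin k), v.2) = v from
        Prod.ext (Fin.ext (by simp only []; omega)) rfl]
    · rw [if_neg hu, if_neg (fun h => hu h.1), neg_zero]
  · rw [sum_ite_zero' _ _ (fun r => by omega), if_neg (fun h => hv h.2)]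

lemma Bb_mul_NcB (m k : ℕ) (P : ℕ → Matrix (Fin m) (Fin m) F) :
    Bb (F := F) m k * NcB m k P =
      Matrix.of fun u v =>
        if (u.1 : ℕ) < k - 1 then -(Ahat m k P u v) else 0 := by
  refine Matrix.ext fun u v => ?_
  simp only [Matrix.of_apply]
  rw [Matrix.mul_apply, ← Finset.univ_product_univ, Finset.sum_product]
  have h1 : ∀ (s : Fin (k - 1)) (c : Fin m),
      Bb m k u (s, c) * NcB m k P (s, c) v
        = if u.2 = c then Bs k u.1 s * NcB m k P (s, c) v else 0 := by
    intro s c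
    simp only [Bb, kroneckerMap_apply, Matrix.one_apply]
    split_ifs <;> ring
  rw [Finset.sum_congr rfl fun s _ => by
    rw [Finset.sum_congr rfl fun c _ => h1 s c,
      Finset.sum_ite_eq Finset.univ u.2 (fun c => Bs k u.1 s * NcB m k P (s, c) v),
      if_pos (Finset.mem_univ _)]]
  have h2 : ∀ s : Fin (k - 1), Bs k u.1 s * NcB m k P (s, u.2) v
      = if (u.1 : ℕ) = (s : ℕ) then NcB m k P (s, u.2) v else 0 := by
    intro s
    simp only [Bs, Matrix.of_apply]
    split_ifs <;> ring
  rw [Finset.sum_congr rfl fun s _ => h2 s]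
  by_cases hu : (u.1 : ℕ) < k - 1
  · rw [sum_ite_unique _ _ (⟨(u.1 : ℕ), hu⟩ : Fin (k - 1)) (fun s => by
      rw [Fin.ext_iff]
      constructor
      · intro h; simp only []; omega
      · intro h; simp only [] at h; omega), if_pos hu]
    simp only [NcB, Matrix.of_apply]
  · rw [sum_ite_zero' _ _ (fun s => by have := s.2; omega), if_neg hu]

/-! ### the big block matrices over the full index type -/

noncomputable def Lmat (m k : ℕ) (P : ℕ → Matrix (Fin m) (Fin m) F) :
    Matrix ((Fin k × Fin m) ⊕ (Fin (k - 1) × Fin m))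
      ((Fin k × Fin m) ⊕ (Fin (k - 1) × Fin m)) (Polynomial F) :=
  Matrix.fromBlocks (Am m k P)
    (Matrix.kroneckerMap (· * ·) (Lphi k)ᵀ (1 : Matrix (Fin m) (Fin m) (Polynomial F)))
    (Matrix.kroneckerMap (· * ·) (Lpsi k) (1 : Matrix (Fin m) (Fin m) (Polynomial F)))
    0

noncomputable def E1 (m k : ℕ) :
    Matrix ((Fin k × Fin m) ⊕ (Fin (k - 1) × Fin m))
      ((Fin k × Fin m) ⊕ (Fin (k - 1) × Fin m)) (Polynomial F) :=
  Matrix.fromBlocks (Tb m k) 0 0 1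

noncomputable def E1Inv (m k : ℕ) :
    Matrix ((Fin k × Fin m) ⊕ (Fin (k - 1) × Fin m))
      ((Fin k × Fin m) ⊕ (Fin (k - 1) × Fin m)) (Polynomial F) :=
  Matrix.fromBlocks (TbInv m k) 0 0 1

noncomputable def Nr (m k : ℕ) (P : ℕ → Matrix (Fin m) (Fin m) F) :
    Matrix ((Fin k × Fin m) ⊕ (Fin (k - 1) × Fin m))
      ((Fin k × Fin m) ⊕ (Fin (k - 1) × Fin m)) (Polynomial F) :=
  Matrix.fromBlocks 0 (NrB m k P) 0 0

noncomputable def Nc (m k : ℕ) (P : ℕ → Matrix (Fin m) (Fin m) F) :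
    Matrix ((Fin k × Fin m) ⊕ (Fin (k - 1) × Fin m))
      ((Fin k × Fin m) ⊕ (Fin (k - 1) × Fin m)) (Polynomial F) :=
  Matrix.fromBlocks 0 0 (NcB m k P) 0

noncomputable def Sm (m k : ℕ) :
    Matrix ((Fin k × Fin m) ⊕ (Fin (k - 1) × Fin m))
      ((Fin k × Fin m) ⊕ (Fin (k - 1) × Fin m)) (Polynomial F) :=
  Matrix.fromBlocks 1 0 0 (-1)

noncomputable def TL (m k : ℕ) (P : ℕ → Matrix (Fin m) (Fin m) F) :
    Matrix (Fin k × Fin m) (Fin k × Fin m) (Polynomial F) :=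
  Matrix.of fun u v =>
    if (u.1 : ℕ) = k - 1 ∧ (v.1 : ℕ) = 0 then Pmm m k P u.2 v.2 else 0

noncomputable def Dmat (m k : ℕ) (P : ℕ → Matrix (Fin m) (Fin m) F) :
    Matrix ((Fin k × Fin m) ⊕ (Fin (k - 1) × Fin m))
      ((Fin k × Fin m) ⊕ (Fin (k - 1) × Fin m)) (Polynomial F) :=
  Matrix.fromBlocks (TL m k P) (Bb m k) (-(Cb m k)) 0

noncomputable def E0 (m k : ℕ) (P : ℕ → Matrix (Fin m) (Fin m) F) :
    Matrix ((Fin k × Fin m) ⊕ (Fin (k - 1) × Fin m))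
      ((Fin k × Fin m) ⊕ (Fin (k - 1) × Fin m)) (Polynomial F) :=
  Sm m k * (1 + Nr m k P) * E1 m k

noncomputable def E0Inv (m k : ℕ) (P : ℕ → Matrix (Fin m) (Fin m) F) :
    Matrix ((Fin k × Fin m) ⊕ (Fin (k - 1) × Fin m))
      ((Fin k × Fin m) ⊕ (Fin (k - 1) × Fin m)) (Polynomial F) :=
  E1Inv m k * ((1 - Nr m k P) * Sm m k)

noncomputable def G0 (m k : ℕ) (P : ℕ → Matrix (Fin m) (Fin m) F) :
    Matrix ((Fin k × Fin m) ⊕ (Fin (k - 1) × Fin m))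
      ((Fin k × Fin m) ⊕ (Fin (k - 1) × Fin m)) (Polynomial F) :=
  E1 m k * (1 + Nc m k P)

noncomputable def G0Inv (m k : ℕ) (P : ℕ → Matrix (Fin m) (Fin m) F) :
    Matrix ((Fin k × Fin m) ⊕ (Fin (k - 1) × Fin m))
      ((Fin k × Fin m) ⊕ (Fin (k - 1) × Fin m)) (Polynomial F) :=
  (1 - Nc m k P) * E1Inv m k

lemma E1_mul_E1Inv (m k : ℕ) : (E1 m k : Matrix _ _ (Polynomial F)) * E1Inv m k = 1 := by
  rw [E1, E1Inv, Matrix.fromBlocks_multiply]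
  simp only [Matrix.mul_zero, Matrix.zero_mul, Matrix.mul_one, Matrix.one_mul,
    add_zero, zero_add, Tb_mul_TbInv]
  exact Matrix.fromBlocks_one

lemma Nr_sq (m k : ℕ) (P : ℕ → Matrix (Fin m) (Fin m) F) : Nr m k P * Nr m k P = 0 := by
  rw [Nr, Matrix.fromBlocks_multiply]
  simp only [Matrix.mul_zero, Matrix.zero_mul, add_zero, zero_add]
  exact Matrix.fromBlocks_zero

lemma Nc_sq (m k : ℕ) (P : ℕ → Matrix (Fin m) (Fin m) F) : Nc m k P * Nc m k P = 0 := by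
  rw [Nc, Matrix.fromBlocks_multiply]
  simp only [Matrix.mul_zero, Matrix.zero_mul, add_zero, zero_add]
  exact Matrix.fromBlocks_zero

lemma Sm_sq (m k : ℕ) : (Sm m k : Matrix _ _ (Polynomial F)) * Sm m k = 1 := by
  rw [Sm, Matrix.fromBlocks_multiply]
  simp only [Matrix.mul_zero, Matrix.zero_mul, Matrix.mul_one, Matrix.one_mul,
    add_zero, zero_add, neg_mul_neg]
  exact Matrix.fromBlocks_one

lemma oneNr_mul (m k : ℕ) (P : ℕ → Matrix (Fin m) (Fin m) F) :
    ((1 + Nr m k P) * (1 - Nr m k P) : Matrix _ _ (Polynomial F)) = 1 := by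
  have h : ((1 + Nr m k P) * (1 - Nr m k P) : Matrix _ _ (Polynomial F))
      = 1 - Nr m k P * Nr m k P := by noncomm_ring
  rw [h, Nr_sq, sub_zero]

lemma oneNc_mul (m k : ℕ) (P : ℕ → Matrix (Fin m) (Fin m) F) :
    ((1 + Nc m k P) * (1 - Nc m k P) : Matrix _ _ (Polynomial F)) = 1 := by
  have h : ((1 + Nc m k P) * (1 - Nc m k P) : Matrix _ _ (Polynomial F))
      = 1 - Nc m k P * Nc m k P := by noncomm_ring
  rw [h, Nc_sq, sub_zero]

lemma E0_mul_E0Inv (m k : ℕ) (P : ℕ → Matrix (Fin m) (Fin m) F) :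
    E0 m k P * E0Inv m k P = 1 := by
  rw [E0, E0Inv]
  calc Sm m k * (1 + Nr m k P) * E1 m k * (E1Inv m k * ((1 - Nr m k P) * Sm m k))
      = Sm m k * ((1 + Nr m k P) * ((E1 m k * E1Inv m k) * ((1 - Nr m k P) * Sm m k))) := by
        rw [Matrix.mul_assoc, Matrix.mul_assoc, Matrix.mul_assoc]
    _ = Sm m k * (((1 + Nr m k P) * (1 - Nr m k P)) * Sm m k) := by
        rw [E1_mul_E1Inv, Matrix.one_mul, Matrix.mul_assoc]
    _ = 1 := by rw [oneNr_mul, Matrix.one_mul, Sm_sq]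

lemma G0_mul_G0Inv (m k : ℕ) (P : ℕ → Matrix (Fin m) (Fin m) F) :
    G0 m k P * G0Inv m k P = 1 := by
  rw [G0, G0Inv]
  calc E1 m k * (1 + Nc m k P) * ((1 - Nc m k P) * E1Inv m k)
      = E1 m k * (((1 + Nc m k P) * (1 - Nc m k P)) * E1Inv m k) := by
        rw [Matrix.mul_assoc, Matrix.mul_assoc]
    _ = 1 := by rw [oneNc_mul, Matrix.one_mul, E1_mul_E1Inv]

lemma step1 (m k : ℕ) (P : ℕ → Matrix (Fin m) (Fin m) F) :
    E1 m k * Lmat m k P * E1 m k =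
      Matrix.fromBlocks (Ahat m k P) (Bb m k) (Cb m k) 0 := by
  rw [E1, Lmat, Matrix.fromBlocks_multiply, Matrix.fromBlocks_multiply]
  simp only [Matrix.mul_zero, Matrix.zero_mul, Matrix.mul_one, Matrix.one_mul,
    add_zero, zero_add]
  rw [show (Tb (F := F) m k * Matrix.kroneckerMap (· * ·) (Lphi (F := F) k)ᵀ
        (1 : Matrix (Fin m) (Fin m) (Polynomial F))) = Bb m k from by
    rw [Tb, Bb, ← Matrix.mul_kronecker_mul, Ts_mul_Lphi, Matrix.one_mul]]
  rw [show (Matrix.kroneckerMap (· * ·) (Lpsi (F := F) k)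
        (1 : Matrix (Fin m) (Fin m) (Polynomial F)) * Tb (F := F) m k) = Cb m k from by
    rw [Tb, Cb, ← Matrix.mul_kronecker_mul, Lpsi_mul_Ts, Matrix.one_mul]]
  rw [Matrix.mul_assoc, Ahat]
  rw [Matrix.mul_assoc]

lemma topleft_sum (m k : ℕ) (hk : 1 ≤ k) (P : ℕ → Matrix (Fin m) (Fin m) F)
    (hpal : ∀ i ≤ 2 * k - 1, P i = (P (2 * k - 1 - i))ᵀ) :
    Ahat m k P + NrB m k P * Cb (F := F) m k + Bb (F := F) m k * NcB m k P = TL m k P := by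
  rw [NrB_mul_Cb, Bb_mul_NcB]
  refine Matrix.ext fun u v => ?_
  simp only [Matrix.add_apply, Matrix.of_apply, TL]
  by_cases h1 : (u.1 : ℕ) = k - 1
  · by_cases h2 : 1 ≤ (v.1 : ℕ)
    · rw [if_pos ⟨h1, h2⟩, if_neg (by omega), if_neg (by omega)]
      ring
    · rw [if_neg (fun h => h2 h.2), if_neg (by omega), if_pos ⟨h1, by omega⟩]
      have hu : u = ((⟨k - 1, by omega⟩ : Fin k), u.2) :=
        Prod.ext (Fin.ext (by simp only []; omega)) rfl
      have hv : v = ((⟨0, by omega⟩ : Fin k), v.2) :=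
        Prod.ext (Fin.ext (by simp only []; omega)) rfl
      rw [hu, hv, Ahat_entry m k hk P hpal]
      ring
  · rw [if_neg (fun h => h1 h.1), if_pos (by have := u.1.2; omega),
      if_neg (fun h => h1 h.1)]
    ring

lemma key_product (m k : ℕ) (hk : 1 ≤ k) (P : ℕ → Matrix (Fin m) (Fin m) F)
    (hpal : ∀ i ≤ 2 * k - 1, P i = (P (2 * k - 1 - i))ᵀ) :
    E0 m k P * Lmat m k P * G0 m k P = Dmat m k P := by
  rw [E0, G0]
  have hassoc : Sm m k * (1 + Nr m k P) * E1 m k * Lmat m k P * (E1 m k * (1 + Nc m k P))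
      = Sm m k * ((1 + Nr m k P) * (E1 m k * Lmat m k P * E1 m k) * (1 + Nc m k P)) := by
    simp only [Matrix.mul_assoc]
  rw [hassoc, step1]
  set L1 : Matrix ((Fin k × Fin m) ⊕ (Fin (k - 1) × Fin m))
      ((Fin k × Fin m) ⊕ (Fin (k - 1) × Fin m)) (Polynomial F) :=
    Matrix.fromBlocks (Ahat m k P) (Bb m k) (Cb m k) 0 with hL1
  have hNrL1 : Nr m k P * L1 = Matrix.fromBlocks (NrB m k P * Cb (F := F) m k) 0 0 0 := by
    rw [hL1, Nr, Matrix.fromBlocks_multiply]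
    simp only [Matrix.mul_zero, Matrix.zero_mul, add_zero, zero_add]
  have hL1Nc : L1 * Nc m k P = Matrix.fromBlocks (Bb (F := F) m k * NcB m k P) 0 0 0 := by
    rw [hL1, Nc, Matrix.fromBlocks_multiply]
    simp only [Matrix.mul_zero, Matrix.zero_mul, add_zero, zero_add]
  have hNrL1Nc : Nr m k P * (L1 * Nc m k P) = 0 := by
    rw [hL1Nc, Nr, Matrix.fromBlocks_multiply]
    simp only [Matrix.mul_zero, Matrix.zero_mul, add_zero, zero_add]
    exact Matrix.fromBlocks_zero
  have hexp : (1 + Nr m k P) * L1 * (1 + Nc m k P)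
      = L1 + Nr m k P * L1 + (L1 * Nc m k P + Nr m k P * (L1 * Nc m k P)) := by
    noncomm_ring
  rw [hexp, hNrL1Nc, add_zero, hNrL1, hL1Nc, hL1]
  rw [Matrix.fromBlocks_add, Matrix.fromBlocks_add]
  simp only [add_zero]
  have htl : Ahat m k P + NrB m k P * Cb (F := F) m k + Bb (F := F) m k * NcB m k P = TL m k P :=
    topleft_sum m k hk P hpal
  rw [htl, Sm, Dmat, Matrix.fromBlocks_multiply]
  simp only [Matrix.mul_zero, Matrix.zero_mul, Matrix.mul_one, Matrix.one_mul,
    add_zero, zero_add]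
  rw [Matrix.neg_mul, Matrix.one_mul]

/-! ### reindexing equivalences -/

abbrev sigmaT (m k : ℕ) : Type :=
  ((Fin (k - 1) × Fin m) ⊕ (Fin (k - 1) × Fin m))

instance (m k : ℕ) : Fintype (sigmaT m k) := by unfold sigmaT; infer_instance
instance (m k : ℕ) : DecidableEq (sigmaT m k) := by unfold sigmaT; infer_instance

def rho (m k : ℕ) (hk : 1 ≤ k) :
    ((Fin k × Fin m) ⊕ (Fin (k - 1) × Fin m)) ≃ (sigmaT m k ⊕ Fin m) where
  toFun x :=
    match x with
    | .inl ua =>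
        if h : (ua.1 : ℕ) < k - 1 then .inl (.inl (⟨(ua.1 : ℕ), h⟩, ua.2)) else .inr ua.2
    | .inr rc => .inl (.inr rc)
  invFun y :=
    match y with
    | .inl (.inl ia) => .inl (⟨(ia.1 : ℕ), by have := ia.1.2; omega⟩, ia.2)
    | .inl (.inr rc) => .inr rc
    | .inr a => .inl (⟨k - 1, by omega⟩, a)
  left_inv := by
    rintro (⟨i, a⟩ | rc)
    · by_cases h : (i : ℕ) < k - 1
      · simp only [dif_pos h]
      · simp only [dif_neg h]
        have : (i : ℕ) = k - 1 := by have := i.2; omega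
        congr 1
        exact Prod.ext (Fin.ext (by simp [this])) rfl
    · rfl
  right_inv := by
    rintro ((⟨i, a⟩ | rc) | a)
    · have h : (i : ℕ) < k - 1 := i.2
      simp only [dif_pos h]
    · rfl
    · simp
  
def kap (m k : ℕ) (hk : 1 ≤ k) :
    ((Fin k × Fin m) ⊕ (Fin (k - 1) × Fin m)) ≃ (sigmaT m k ⊕ Fin m) where
  toFun x :=
    match x with
    | .inl qb =>
        if h : (qb.1 : ℕ) = 0 then .inr qb.2
        else .inl (.inr (⟨(qb.1 : ℕ) - 1, by have := qb.1.2; omega⟩, qb.2))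
    | .inr sc => .inl (.inl sc)
  invFun y :=
    match y with
    | .inl (.inl sc) => .inr sc
    | .inl (.inr rb) => .inl (⟨(rb.1 : ℕ) + 1, by have := rb.1.2; omega⟩, rb.2)
    | .inr b => .inl (⟨0, by omega⟩, b)
  left_inv := by
    rintro (⟨q, b⟩ | sc)
    · by_cases h : (q : ℕ) = 0
      · simp only [dif_pos h]
        congr 1
        exact Prod.ext (Fin.ext (by simp [h])) rfl
      · simp only [dif_neg h]
        congr 1
        exact Prod.ext (Fin.ext (by simp; omega)) rfl
    · rfl
  right_inv := by
    rintro ((sc | ⟨r, b⟩) | b)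
    · rfl
    · simp only []
      rw [dif_neg (by simp)]
      congr 2
    · simp

lemma Dmat_reindex (m k : ℕ) (hk : 1 ≤ k) (P : ℕ → Matrix (Fin m) (Fin m) F) :
    (Matrix.fromBlocks 1 0 0 (Dmat m k P) :
        Matrix (Fin 0 ⊕ _) (Fin 0 ⊕ _) (Polynomial F)) =
      Matrix.reindex
        (((Equiv.emptySum (Fin 0) _).trans ((rho m k hk).trans
          (Equiv.sumCongr (Fintype.equivFin (sigmaT m k)) (Equiv.refl (Fin m))))).symm)
        (((Equiv.emptySum (Fin 0) _).trans ((kap m k hk).trans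
          (Equiv.sumCongr (Fintype.equivFin (sigmaT m k)) (Equiv.refl (Fin m))))).symm)
        (Matrix.fromBlocks 1 0 0 (Pmm m k P)) := by
  have hone : ∀ x y : sigmaT m k,
      ((1 : Matrix (Fin (Fintype.card (sigmaT m k))) (Fin (Fintype.card (sigmaT m k)))
          (Polynomial F)) (Fintype.equivFin (sigmaT m k) x) (Fintype.equivFin (sigmaT m k) y))
        = (1 : Matrix (sigmaT m k) (sigmaT m k) (Polynomial F)) x y := by
    intro x y
    rw [Matrix.one_apply, Matrix.one_apply]
    simp only [EmbeddingLike.apply_eq_iff_eq]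
  have hBb : ∀ (ui : Fin k) (ua : Fin m) (vs : Fin (k - 1)) (vc : Fin m),
      (Bb m k : Matrix (Fin k × Fin m) (Fin (k - 1) × Fin m) (Polynomial F)) (ui, ua) (vs, vc)
        = if (ui : ℕ) = (vs : ℕ) ∧ ua = vc then 1 else 0 := by
    intro ui ua vs vc
    simp only [Bb, Matrix.kroneckerMap_apply, Bs, Matrix.of_apply, Matrix.one_apply]
    split_ifs <;> simp_all
  have hCb : ∀ (ur : Fin (k - 1)) (uc : Fin m) (vi : Fin k) (vb : Fin m),
      (-(Cb m k) : Matrix (Fin (k - 1) × Fin m) (Fin k × Fin m) (Polynomial F)) (ur, uc) (vi, vb)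
        = if (vi : ℕ) = (ur : ℕ) + 1 ∧ uc = vb then 1 else 0 := by
    intro ur uc vi vb
    simp only [Matrix.neg_apply, Cb, Matrix.kroneckerMap_apply, Cs, Matrix.of_apply,
      Matrix.one_apply]
    split_ifs <;> simp_all
  refine Matrix.ext fun x y => ?_
  rcases x with z | u
  · exact z.elim0
  rcases y with z | v
  · exact z.elim0
  rw [Matrix.reindex_apply, Matrix.submatrix_apply, Equiv.symm_symm, Equiv.symm_symm,
    Matrix.fromBlocks_apply₂₂]
  simp only [Equiv.trans_apply, Equiv.emptySum_apply_inr]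
  rcases u with ⟨ui, ua⟩ | ⟨ur, uc⟩ <;> rcases v with ⟨vi, vb⟩ | ⟨vs, vc⟩ <;>
    simp only [rho, kap, Equiv.coe_fn_mk]
  · -- row: top, col: left
    rw [show Dmat m k P (Sum.inl (ui, ua)) (Sum.inl (vi, vb))
      = if (ui : ℕ) = k - 1 ∧ (vi : ℕ) = 0 then Pmm m k P ua vb else 0 from rfl]
    by_cases hu : (ui : ℕ) < k - 1 <;> by_cases hv : (vi : ℕ) = 0
    · rw [dif_pos hu, dif_pos hv]
      simp only [Equiv.sumCongr_apply, Sum.map_inl, Sum.map_inr, Equiv.refl_apply,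
        Matrix.fromBlocks_apply₁₂, Matrix.zero_apply]
      rw [if_neg (by omega)]
    · rw [dif_pos hu, dif_neg hv]
      simp only [Equiv.sumCongr_apply, Sum.map_inl, Matrix.fromBlocks_apply₁₁]
      rw [if_neg (by omega), hone, Matrix.one_apply_ne (by simp)]
    · rw [dif_neg hu, dif_pos hv]
      simp only [Equiv.sumCongr_apply, Sum.map_inr, Equiv.refl_apply,
        Matrix.fromBlocks_apply₂₂]
      rw [if_pos ⟨by have := ui.2; omega, hv⟩]
    · rw [dif_neg hu, dif_neg hv]
      simp only [Equiv.sumCongr_apply, Sum.map_inr, Sum.map_inl, Equiv.refl_apply,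
        Matrix.fromBlocks_apply₂₁, Matrix.zero_apply]
      rw [if_neg (by omega)]
  · -- row: top, col: right
    rw [show Dmat m k P (Sum.inl (ui, ua)) (Sum.inr (vs, vc))
      = Bb m k (ui, ua) (vs, vc) from rfl, hBb]
    by_cases hu : (ui : ℕ) < k - 1
    · rw [dif_pos hu]
      simp only [Equiv.sumCongr_apply, Sum.map_inl, Matrix.fromBlocks_apply₁₁]
      rw [hone, Matrix.one_apply]
      split_ifs with hcond hcc hcc
      · rfl
      · exact absurd (congrArg Sum.inl (Prod.ext (Fin.ext (by
          simpa using hcond.1)) hcond.2)) hcc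
      · refine absurd ?_ hcond
        have h' := Sum.inl_injective hcc
        refine ⟨by simpa using congrArg (fun p => ((Prod.fst p : Fin (k - 1)) : ℕ)) h', ?_⟩
        exact congrArg Prod.snd h'
      · rfl
    · rw [dif_neg hu]
      simp only [Equiv.sumCongr_apply, Sum.map_inr, Equiv.refl_apply,
        Matrix.fromBlocks_apply₂₁, Matrix.zero_apply]
      rw [if_neg (fun h => by have := vs.2; omega)]
      simp only [Sum.map_inl, Matrix.fromBlocks_apply₂₁, Matrix.zero_apply]
  · -- row: bottom, col: left
    rw [show Dmat m k P (Sum.inr (ur, uc)) (Sum.inl (vi, vb))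
      = (-(Cb m k)) (ur, uc) (vi, vb) from rfl, hCb]
    by_cases hv : (vi : ℕ) = 0
    · rw [dif_pos hv]
      simp only [Equiv.sumCongr_apply, Sum.map_inl, Sum.map_inr, Equiv.refl_apply,
        Matrix.fromBlocks_apply₁₂, Matrix.zero_apply]
      rw [if_neg (fun h => by omega)]
    · rw [dif_neg hv]
      simp only [Equiv.sumCongr_apply, Sum.map_inl, Matrix.fromBlocks_apply₁₁]
      rw [hone, Matrix.one_apply]
      split_ifs with hcond hcc hcc
      · rfl
      · exact absurd (congrArg Sum.inr (Prod.ext (Fin.ext (by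
          simp only []; omega)) hcond.2)) hcc
      · refine absurd ?_ hcond
        have h' := Sum.inr_injective hcc
        have h1' := congrArg (fun p => ((Prod.fst p : Fin (k - 1)) : ℕ)) h'
        simp only [] at h1'
        exact ⟨by omega, congrArg Prod.snd h'⟩
      · rfl
  · -- row: bottom, col: right
    rw [show Dmat m k P (Sum.inr (ur, uc)) (Sum.inr (vs, vc)) = 0 from rfl]
    simp only [Equiv.sumCongr_apply, Sum.map_inl, Matrix.fromBlocks_apply₁₁]
    rw [hone, Matrix.one_apply_ne (by simp)]

/-! ### the two halves -/

lemma Lmat_palindromic (m k : ℕ) (P : ℕ → Matrix (Fin m) (Fin m) F) :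
    Lmat m k P = (Matrix.of fun i j =>
      Polynomial.C ((Lmat m k P i j).coeff 1) +
        Polynomial.X * Polynomial.C ((Lmat m k P i j).coeff 0))ᵀ := by
  have c1 : ∀ a b : F, ((X : Polynomial F) * Polynomial.C a + Polynomial.C b).coeff 1 = a := by
    intro a b; simp
  have c0 : ∀ a b : F, ((X : Polynomial F) * Polynomial.C a + Polynomial.C b).coeff 0 = b := by
    intro a b; simp
  refine Matrix.ext fun i j => ?_
  rw [Matrix.transpose_apply, Matrix.of_apply]
  rcases i with ⟨u1, u2⟩ | ⟨u1, u2⟩ <;> rcases j with ⟨v1, v2⟩ | ⟨v1, v2⟩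
  · simp only [Lmat, Matrix.fromBlocks_apply₁₁, Am, Matrix.add_apply, Matrix.smul_apply,
      Matrix.map_apply, Matrix.transpose_apply, smul_eq_mul]
    rw [c1, c0]
    ring
  · simp only [Lmat, Matrix.fromBlocks_apply₁₂, Matrix.fromBlocks_apply₂₁,
      Matrix.kroneckerMap_apply]
    by_cases hm2 : u2 = v2
    · subst hm2
      simp only [Matrix.one_apply_eq, mul_one]
      simp only [Lphi, Lpsi, Matrix.transpose_apply, Matrix.of_apply]
      split_ifs <;> simp [Polynomial.coeff_one]
    · rw [Matrix.one_apply_ne hm2, Matrix.one_apply_ne (fun h => hm2 h.symm)]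
      simp
  · simp only [Lmat, Matrix.fromBlocks_apply₁₂, Matrix.fromBlocks_apply₂₁,
      Matrix.kroneckerMap_apply]
    by_cases hm2 : u2 = v2
    · subst hm2
      simp only [Matrix.one_apply_eq, mul_one]
      simp only [Lphi, Lpsi, Matrix.transpose_apply, Matrix.of_apply]
      split_ifs <;> simp [Polynomial.coeff_one]
    · rw [Matrix.one_apply_ne hm2, Matrix.one_apply_ne (fun h => hm2 h.symm)]
      simp
  · simp only [Lmat, Matrix.fromBlocks_apply₂₂, Matrix.zero_apply]
    simp

lemma Lmat_isLinearization (m k : ℕ) (hk : 1 ≤ k) (P : ℕ → Matrix (Fin m) (Fin m) F)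
    (hpal : ∀ i ≤ 2 * k - 1, P i = (P (2 * k - 1 - i))ᵀ) :
    IsLinearization (Lmat m k P) (Pmm m k P) := by
  refine ⟨0, Fintype.card (sigmaT m k),
    Matrix.fromBlocks 1 0 0 (E0 m k P), Matrix.fromBlocks 1 0 0 (G0 m k P),
    (Equiv.emptySum (Fin 0) _).trans ((rho m k hk).trans
      (Equiv.sumCongr (Fintype.equivFin (sigmaT m k)) (Equiv.refl (Fin m)))),
    (Equiv.emptySum (Fin 0) _).trans ((kap m k hk).trans
      (Equiv.sumCongr (Fintype.equivFin (sigmaT m k)) (Equiv.refl (Fin m)))),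
    ?_, ?_, ?_⟩
  · refine unimodular_of_mul_eq_one
      (E' := Matrix.fromBlocks 1 0 0 (E0Inv m k P)) ?_
    rw [Matrix.fromBlocks_multiply]
    simp [E0_mul_E0Inv, Matrix.fromBlocks_one]
  · refine unimodular_of_mul_eq_one
      (E' := Matrix.fromBlocks 1 0 0 (G0Inv m k P)) ?_
    rw [Matrix.fromBlocks_multiply]
    simp [G0_mul_G0Inv, Matrix.fromBlocks_one]
  · rw [Matrix.fromBlocks_multiply, Matrix.fromBlocks_multiply]
    simp only [Matrix.mul_one, Matrix.one_mul, Matrix.mul_zero, Matrix.zero_mul,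
      add_zero, zero_add]
    rw [show (E0 m k P * Lmat m k P) * G0 m k P = Dmat m k P from
      key_product m k hk P hpal]
    exact Dmat_reindex m k hk P

/-- Concrete T-palindromic linearization of a T-palindromic matrix polynomial
of degree `2k - 1`, obtained by placing the coefficients in the last block
column of `M`. -/
theorem statement16 (m k : ℕ) (hm : 1 ≤ m) (hk : 1 ≤ k)
    (P : ℕ → Matrix (Fin m) (Fin m) F)
    (hpal : ∀ i ≤ 2 * k - 1, P i = (P (2 * k - 1 - i))ᵀ)
    (hdeg : P (2 * k - 1) ≠ 0) :
    let M : Matrix (Fin k × Fin m) (Fin k × Fin m) F :=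
      Matrix.of fun p q =>
        if (q.1 : ℕ) = k - 1 then P (p.1 : ℕ) q.2 p.2 else 0
    let Lφ : Matrix (Fin (k - 1)) (Fin k) (Polynomial F) :=
      Matrix.of fun r c =>
        if (c : ℕ) = (r : ℕ) then 1
        else if (c : ℕ) = (r : ℕ) + 1 then -Polynomial.X
        else 0
    let Lψ : Matrix (Fin (k - 1)) (Fin k) (Polynomial F) :=
      Matrix.of fun r c =>
        if (c : ℕ) = (r : ℕ) then Polynomial.X
        else if (c : ℕ) = (r : ℕ) + 1 then -1
        else 0
    let L : Matrix ((Fin k × Fin m) ⊕ (Fin (k - 1) × Fin m))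
        ((Fin k × Fin m) ⊕ (Fin (k - 1) × Fin m)) (Polynomial F) :=
      Matrix.fromBlocks
        ((Polynomial.X : Polynomial F) • M.map Polynomial.C + Mᵀ.map Polynomial.C)
        (Matrix.kroneckerMap (· * ·) Lφᵀ (1 : Matrix (Fin m) (Fin m) (Polynomial F)))
        (Matrix.kroneckerMap (· * ·) Lψ (1 : Matrix (Fin m) (Fin m) (Polynomial F)))
        0
    let Pm : Matrix (Fin m) (Fin m) (Polynomial F) :=
      Matrix.of fun a b =>
        ∑ i ∈ Finset.range (2 * k), Polynomial.C (P i a b) * Polynomial.X ^ i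
    L = (Matrix.of fun i j =>
      Polynomial.C ((L i j).coeff 1) + Polynomial.X * Polynomial.C ((L i j).coeff 0))ᵀ ∧
    IsLinearization L Pm := by
  intro M Lφ Lψ L Pm
  exact ⟨Lmat_palindromic m k P, Lmat_isLinearization m k hk P hpal⟩

end PaperLin
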